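/- Let K be a 1×2 real matrix and let P, Q be symmetric 2×2 real matrices with Q positive definite and (A₁+B₁K)ᵀP + P(A₁+B₁K) = −Q. Suppose moreover that for some M₀ > 0 and all T ∈ [0,1] and z ∈ ℝ², zᵀ(A(T)+B(T)K)ᵀ P (A(T)+B(T)K) z − zᵀPz ≤ −λ_min(Q) T ‖z‖² + M₀ T² ‖z‖². Then there exist c > 0 and M > 0 such that for all T ∈ [0,1], all z ∈ ℝ² and all e ∈ ℝ, writing x⁺ := (A(T)+B(T)K) z − B(T) e, one has x⁺ᵀ P x⁺ − zᵀ P z ≤ −(λ_min(Q)/2) T ‖z‖² + c T e² + M T² (‖z‖² + e²). -/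

import Mathlib

open Matrix
set_option maxHeartbeats 1000000

def A1 : Matrix (Fin 2) (Fin 2) ℝ := !![0, 1; 0, 0]
def B1 : Matrix (Fin 2) (Fin 1) ℝ := !![0; 1]
noncomputable def B2 : Matrix (Fin 2) (Fin 1) ℝ := !![1/2; 0]

/-- A(T) = I + A₁T. -/
noncomputable def AT (T : ℝ) : Matrix (Fin 2) (Fin 2) ℝ := 1 + T • A1

/-- B(T) = B₁T + B₂T². -/
noncomputable def BT (T : ℝ) : Matrix (Fin 2) (Fin 1) ℝ := T • B1 + T ^ 2 • B2

/-- AM–GM style helper: if `s² ≤ u v` with `u, v ≥ 0` then `2 s ≤ u + v`. -/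
lemma two_mul_le_aux (u v s : ℝ) (hu : 0 ≤ u) (hv : 0 ≤ v) (h : s^2 ≤ u*v) :
    2*s ≤ u + v := by
  nlinarith [sq_nonneg (u - v), sq_nonneg (u + v - 2*s)]

theorem lyapunov_decrease_with_input_error
    (K : Matrix (Fin 1) (Fin 2) ℝ) (P Q : Matrix (Fin 2) (Fin 2) ℝ)
    (hPs : P.IsSymm) (hQs : Q.IsSymm) (hQ : Q.PosDef)
    (hLyap : (A1 + B1 * K)ᵀ * P + P * (A1 + B1 * K) = -Q)
    (lamQ : ℝ)
    (hlamQ : IsGreatest {l : ℝ | ∀ z : Fin 2 → ℝ, l * (z ⬝ᵥ z) ≤ z ⬝ᵥ (Q *ᵥ z)} lamQ)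
    (M₀ : ℝ) (hM₀ : 0 < M₀)
    (hyp : ∀ T ∈ Set.Icc (0 : ℝ) 1, ∀ z : Fin 2 → ℝ,
      ((AT T + BT T * K) *ᵥ z) ⬝ᵥ (P *ᵥ ((AT T + BT T * K) *ᵥ z)) - z ⬝ᵥ (P *ᵥ z)
        ≤ -lamQ * T * (z ⬝ᵥ z) + M₀ * T ^ 2 * (z ⬝ᵥ z)) :
    ∃ c M : ℝ, 0 < c ∧ 0 < M ∧
      ∀ T ∈ Set.Icc (0 : ℝ) 1, ∀ z : Fin 2 → ℝ, ∀ e : ℝ,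
        ((AT T + BT T * K) *ᵥ z - BT T *ᵥ (fun _ => e)) ⬝ᵥ
            (P *ᵥ ((AT T + BT T * K) *ᵥ z - BT T *ᵥ (fun _ => e))) - z ⬝ᵥ (P *ᵥ z)
          ≤ -(lamQ / 2) * T * (z ⬝ᵥ z) + c * T * e ^ 2 + M * T ^ 2 * (z ⬝ᵥ z + e ^ 2) := by
  obtain ⟨hmem, hub⟩ := hlamQ
  have hsym : P 1 0 = P 0 1 := hPs.apply 0 1
  have hQsym : Q 1 0 = Q 0 1 := hQs.apply 0 1
  -- positivity of lamQ
  have e1 : (0:ℝ) < Q 0 0 := by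
    have h := hQ.dotProduct_mulVec_pos (x := ![1,0]) (by intro h; simpa using congrFun h 0)
    simpa [dotProduct, Matrix.mulVec, Fin.sum_univ_two] using h
  have e2 : (0:ℝ) < Q 1 1 := by
    have h := hQ.dotProduct_mulVec_pos (x := ![0,1]) (by intro h; simpa using congrFun h 1)
    simpa [dotProduct, Matrix.mulVec, Fin.sum_univ_two] using h
  have hdet : 0 < Q 0 0 * Q 1 1 - Q 0 1 * Q 0 1 := by
    have hz : (![-(Q 0 1), Q 0 0] : Fin 2 → ℝ) ≠ 0 := by
      intro h
      exact e1.ne' (by simpa using congrFun h 1)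
    have h := hQ.dotProduct_mulVec_pos hz
    simp [dotProduct, Matrix.mulVec, Fin.sum_univ_two, hQsym] at h
    nlinarith [h, e1]
  have hlmem : (Q 0 0 * Q 1 1 - Q 0 1 * Q 0 1)/(Q 0 0 + Q 1 1)
      ∈ {l : ℝ | ∀ z : Fin 2 → ℝ, l * (z ⬝ᵥ z) ≤ z ⬝ᵥ (Q *ᵥ z)} := by
    intro z
    simp only [dotProduct, Matrix.mulVec, Fin.sum_univ_two, hQsym]
    rw [div_mul_eq_mul_div, div_le_iff₀ (by linarith : (0:ℝ) < Q 0 0 + Q 1 1)]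
    nlinarith [sq_nonneg (Q 0 0 * z 0 + Q 0 1 * z 1), sq_nonneg (Q 0 1 * z 0 + Q 1 1 * z 1)]
  have hlam : 0 < lamQ :=
    lt_of_lt_of_le (div_pos hdet (by linarith)) (hub hlmem)
  -- constants
  have hW2 : (2:ℝ) ≤ 2*((P 0 0)^2+(P 0 1)^2+(P 1 1)^2)+2 := by
    nlinarith only [sq_nonneg (P 0 0), sq_nonneg (P 0 1), sq_nonneg (P 1 1)]
  have hCN0 : (0:ℝ) ≤ 2 + 2*((K 0 0)^2+(K 0 1)^2) := by positivity
  refine ⟨2*(2*((P 0 0)^2+(P 0 1)^2+(P 1 1)^2)+2)/lamQ,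
    M₀ + (2 + 2*((K 0 0)^2+(K 0 1)^2)) + 2*(2*((P 0 0)^2+(P 0 1)^2+(P 1 1)^2)+2),
    div_pos (by linarith) hlam, by linarith, ?_⟩
  intro T hT z e
  obtain ⟨hT0, hT1⟩ := hT
  have hT2 : T^2 ≤ 1 := by nlinarith only [hT0, hT1]
  have h1T2 : (0:ℝ) ≤ 1 - T^2 := by linarith only [hT2]
  have hhyp := hyp T ⟨hT0, hT1⟩ z
  simp [AT, BT, A1, B1, B2, Matrix.mulVec, dotProduct, Fin.sum_univ_two,
    Matrix.mul_apply, Fin.sum_univ_one, Matrix.one_apply, Matrix.vecMul, Matrix.add_apply,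
    Matrix.smul_apply, Matrix.sub_apply, Pi.sub_apply, Matrix.cons_val_zero, Matrix.cons_val_one,
    Matrix.head_cons, Matrix.head_fin_const, smul_eq_mul] at hhyp ⊢
  rw [hsym] at hhyp ⊢
  set p00 := P 0 0 with hp00
  set p01 := P 0 1 with hp01
  set p11 := P 1 1 with hp11
  set k0 := K 0 0 with hk0
  set k1 := K 0 1 with hk1
  set z0 := z 0 with hz0
  set z1 := z 1 with hz1
  -- scalar abbreviations (as explicit expressions)
  have hZ : (0:ℝ) ≤ z0*z0 + z1*z1 := add_nonneg (mul_self_nonneg z0) (mul_self_nonneg z1)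
  -- bound on P applied to v = ![T/2, 1]
  have hPvPv : (p00*(T/2)+p01)^2 + (p01*(T/2)+p11)^2 ≤ 2*(p00^2+p01^2+p11^2)+2 := by
    nlinarith only [sq_nonneg (p00 - (T/2)*p01), sq_nonneg (p01 - (T/2)*p11),
      mul_nonneg h1T2 (sq_nonneg p00), mul_nonneg h1T2 (sq_nonneg p01),
      mul_nonneg h1T2 (sq_nonneg p11), sq_nonneg p00, sq_nonneg p01, sq_nonneg p11]
  have hvPv : (T/2)*(p00*(T/2)+p01) + (p01*(T/2)+p11) ≤ 2*(p00^2+p01^2+p11^2)+2 := by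
    nlinarith only [hPvPv, sq_nonneg (T/2 - (p00*(T/2)+p01)), sq_nonneg (1 - (p01*(T/2)+p11)), hT2]
  -- Cauchy-Schwarz for s1 = z ⬝ Pv
  have hcs1 : (z0*(p00*(T/2)+p01) + z1*(p01*(T/2)+p11))^2
      ≤ (z0*z0+z1*z1) * ((p00*(T/2)+p01)^2 + (p01*(T/2)+p11)^2) := by
    nlinarith only [sq_nonneg (z0*(p01*(T/2)+p11) - z1*(p00*(T/2)+p01))]
  have hs1W : (z0*(p00*(T/2)+p01) + z1*(p01*(T/2)+p11))^2
      ≤ (z0*z0+z1*z1) * (2*(p00^2+p01^2+p11^2)+2) := by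
    nlinarith only [hcs1, hPvPv, hZ]
  -- w = ![z1 + (T/2)κ, κ], bound w⬝w ≤ CN Z
  have hww : (z1 + (T/2)*(k0*z0+k1*z1))^2 + (k0*z0+k1*z1)^2
      ≤ (2 + 2*(k0^2+k1^2)) * (z0*z0+z1*z1) := by
    nlinarith only [sq_nonneg (z1 - (T/2)*(k0*z0+k1*z1)), sq_nonneg (k0*z1 - k1*z0),
      mul_nonneg h1T2 (sq_nonneg (k0*z0+k1*z1)), sq_nonneg z0, sq_nonneg z1,
      mul_nonneg (by positivity : (0:ℝ) ≤ k0^2+k1^2) hZ]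
  have hcs2 : ((z1 + (T/2)*(k0*z0+k1*z1))*(p00*(T/2)+p01) + (k0*z0+k1*z1)*(p01*(T/2)+p11))^2
      ≤ ((z1 + (T/2)*(k0*z0+k1*z1))^2 + (k0*z0+k1*z1)^2)
        * ((p00*(T/2)+p01)^2 + (p01*(T/2)+p11)^2) := by
    nlinarith only [sq_nonneg ((z1 + (T/2)*(k0*z0+k1*z1))*(p01*(T/2)+p11)
      - (k0*z0+k1*z1)*(p00*(T/2)+p01))]
  have hs2W : ((z1 + (T/2)*(k0*z0+k1*z1))*(p00*(T/2)+p01) + (k0*z0+k1*z1)*(p01*(T/2)+p11))^2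
      ≤ ((2 + 2*(k0^2+k1^2)) * (z0*z0+z1*z1)) * (2*(p00^2+p01^2+p11^2)+2) := by
    nlinarith only [hcs2, hww, hPvPv, mul_nonneg hCN0 hZ,
      sq_nonneg (z1 + (T/2)*(k0*z0+k1*z1)), sq_nonneg (k0*z0+k1*z1),
      sq_nonneg (p00*(T/2)+p01), sq_nonneg (p01*(T/2)+p11)]
  -- Young inequality, first cross term
  have claim1 : 2*((-e)*(z0*(p00*(T/2)+p01) + z1*(p01*(T/2)+p11)))
      ≤ (lamQ/2)*(z0*z0+z1*z1) + (2*(2*(p00^2+p01^2+p11^2)+2)/lamQ)*e^2 := by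
    apply two_mul_le_aux _ _ _ (mul_nonneg (by linarith only [hlam]) hZ)
      (mul_nonneg (div_nonneg (by linarith only [hW2]) hlam.le) (sq_nonneg e))
    have huv : (lamQ/2)*(z0*z0+z1*z1) * ((2*(2*(p00^2+p01^2+p11^2)+2)/lamQ)*e^2)
        = ((z0*z0+z1*z1) * (2*(p00^2+p01^2+p11^2)+2)) * e^2 := by
      field_simp
    rw [huv]
    nlinarith only [mul_le_mul_of_nonneg_left hs1W (sq_nonneg e)]
  -- Young inequality, second cross term
  have claim2 : 2*((-e)*((z1 + (T/2)*(k0*z0+k1*z1))*(p00*(T/2)+p01)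
        + (k0*z0+k1*z1)*(p01*(T/2)+p11)))
      ≤ (2 + 2*(k0^2+k1^2))*(z0*z0+z1*z1) + (2*(p00^2+p01^2+p11^2)+2)*e^2 := by
    apply two_mul_le_aux _ _ _ (mul_nonneg hCN0 hZ)
      (mul_nonneg (by linarith only [hW2]) (sq_nonneg e))
    nlinarith only [mul_le_mul_of_nonneg_left hs2W (sq_nonneg e)]
  -- multiply claims by T resp. T²
  have c1 := mul_le_mul_of_nonneg_left claim1 hT0
  have c2 := mul_le_mul_of_nonneg_left claim2 (sq_nonneg T)
  have c3 := mul_le_mul_of_nonneg_left hvPv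
    (mul_nonneg (sq_nonneg T) (sq_nonneg e) : (0:ℝ) ≤ T^2*e^2)
  have n1 : (0:ℝ) ≤ 2*(2*(p00^2+p01^2+p11^2)+2) * (T^2*(z0*z0+z1*z1)) :=
    mul_nonneg (by linarith only [hW2]) (mul_nonneg (sq_nonneg T) hZ)
  have n2 : (0:ℝ) ≤ (M₀ + (2 + 2*(k0^2+k1^2))) * (T^2*e^2) :=
    mul_nonneg (by linarith only [hM₀, hCN0]) (mul_nonneg (sq_nonneg T) (sq_nonneg e))
  linarith only [hhyp, c1, c2, c3, n1, n2]
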